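/- arXiv:1310.7257 — 2 statements merged into one kernel-verified Lean document; each statement's English description precedes it below -/
import Mathlib

section
/- Wick scaling invariance: let X = (X₁,…,X_n) be a random vector with finite moments of order ≤ |β|, let c ∈ ℝ^n with c^β = 1, and set Y_i = c_i X_i. Then X^β = Y^β as random variables and :Y^β: = :X^β: almost surely. -/
open MeasureTheory MvPolynomial

noncomputable section

def mdeg {ι : Type*} [Fintype ι] (β : ι →₀ ℕ) : ℕ := ∑ i, β i

def IsSegalFamily {ι : Type*} [Fintype ι] [DecidableEq ι]
    (μ : Measure (ι → ℝ)) (N : ℕ∞)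
    (p : (ι →₀ ℕ) → MvPolynomial ι ℝ) : Prop :=
  p 0 = 1 ∧
  (∀ β : ι →₀ ℕ, (mdeg β : ℕ∞) < N → ∀ j : ι,
      pderiv j (p β) = (β j : ℝ) • p (β - Finsupp.single j 1)) ∧
  (∀ β : ι →₀ ℕ, 0 < mdeg β → (mdeg β : ℕ∞) < N → ∫ x, eval x (p β) ∂μ = 0)

def HasMoments {ι : Type*} [Fintype ι] (μ : Measure (ι → ℝ)) (N : ℕ∞) : Prop :=
  ∀ k : ℕ, (k : ℕ∞) < N → Integrable (fun x : ι → ℝ => (∑ i, |x i|) ^ k) μ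

section Aux

set_option linter.unusedSectionVars false

variable {σ : Type*} [Fintype σ] [DecidableEq σ]

lemma coeff_pderiv_ne_zero (f : MvPolynomial σ ℝ) (j : σ) (α : σ →₀ ℕ) (hα : α j ≠ 0) :
    coeff (α - Finsupp.single j 1) (pderiv j f) = (α j : ℝ) * coeff α f := by
  conv_lhs => rw [f.as_sum]
  rw [map_sum, MvPolynomial.coeff_sum]
  rw [Finset.sum_eq_single α]
  · simp [pderiv_monomial, coeff_monomial, mul_comm]
  · intro b hb hbα
    rw [pderiv_monomial, coeff_monomial]
    split_ifs with h
    · rcases Nat.eq_zero_or_pos (b j) with hbj | hbj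
      · simp [hbj]
      · exfalso; apply hbα
        ext i
        have := DFunLike.congr_fun h i
        simp only [Finsupp.coe_tsub, Pi.sub_apply, Finsupp.single_apply] at this
        rcases eq_or_ne i j with rfl | hij
        · simp at this; omega
        · simpa [hij.symm] using this
    · rfl
  · intro hα'
    rw [pderiv_monomial, coeff_monomial]
    have : coeff α f = 0 := MvPolynomial.notMem_support_iff.mp hα'
    simp [this]

lemma eq_C_of_pderiv_eq_zero (f : MvPolynomial σ ℝ) (h : ∀ j, pderiv j f = 0) :
    f = C (coeff 0 f) := by
  ext α
  rw [coeff_C]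
  rcases eq_or_ne α 0 with rfl | hα
  · simp
  · rw [if_neg (by exact fun h' => hα h'.symm)]
    obtain ⟨j, hj⟩ : ∃ j, α j ≠ 0 := by
      by_contra hcon
      push_neg at hcon
      exact hα (Finsupp.ext fun i => hcon i)
    have := coeff_pderiv_ne_zero f j α hj
    rw [h j] at this
    simp only [coeff_zero] at this
    have hj' : (α j : ℝ) ≠ 0 := Nat.cast_ne_zero.mpr hj
    field_simp at this
    exact (mul_eq_zero.mp this.symm).resolve_left hj'

lemma pderiv_bind_scale (c : σ → ℝ) (j : σ) (f : MvPolynomial σ ℝ) :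
    pderiv j (bind₁ (fun i => C (c i) * X i) f) =
      C (c j) * bind₁ (fun i => C (c i) * X i) (pderiv j f) := by
  induction f using MvPolynomial.induction_on with
  | C a => simp
  | add f g hf hg => simp [hf, hg]; ring
  | mul_X f i hf =>
    rcases eq_or_ne i j with rfl | hij
    · simp [pderiv_mul, hf, pderiv_X_self]; ring
    · simp [pderiv_mul, hf, pderiv_X_of_ne hij]; ring

lemma eval_bind_scale (c : σ → ℝ) (x : σ → ℝ) (f : MvPolynomial σ ℝ) :
    eval x (bind₁ (fun i => C (c i) * X i) f) = eval (fun i => c i * x i) f := by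
  induction f using MvPolynomial.induction_on with
  | C a => simp
  | add f g hf hg => simp [hf, hg]
  | mul_X f i hf => simp [hf]

lemma mdeg_sub_single {γ : σ →₀ ℕ} {j : σ} (h : γ j ≠ 0) :
    mdeg (γ - Finsupp.single j 1) + 1 = mdeg γ := by
  rw [mdeg, mdeg, ← Finset.sum_erase_add _ _ (Finset.mem_univ j),
    ← Finset.sum_erase_add _ _ (Finset.mem_univ j)]
  have h1 : ∑ i ∈ Finset.univ.erase j, (γ - Finsupp.single j 1 : σ →₀ ℕ) i
      = ∑ i ∈ Finset.univ.erase j, γ i := by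
    apply Finset.sum_congr rfl
    intro i hi
    have : i ≠ j := (Finset.mem_erase.mp hi).1
    simp [Finsupp.single_apply, Ne.symm this]
  have h2 : (γ - Finsupp.single j 1 : σ →₀ ℕ) j = γ j - 1 := by simp
  rw [h1, h2]
  omega

lemma prod_pow_sub_single {c : σ → ℝ} {γ : σ →₀ ℕ} {j : σ} (h : γ j ≠ 0) :
    ∏ i, c i ^ γ i = (∏ i, c i ^ ((γ - Finsupp.single j 1 : σ →₀ ℕ) i)) * c j := by
  rw [← Finset.prod_erase_mul _ _ (Finset.mem_univ j),
    ← Finset.prod_erase_mul _ _ (Finset.mem_univ j)]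
  have h1 : ∏ i ∈ Finset.univ.erase j, c i ^ ((γ - Finsupp.single j 1 : σ →₀ ℕ) i)
      = ∏ i ∈ Finset.univ.erase j, c i ^ γ i := by
    apply Finset.prod_congr rfl
    intro i hi
    have : i ≠ j := (Finset.mem_erase.mp hi).1
    simp [Finsupp.single_apply, Ne.symm this]
  have h2 : (γ - Finsupp.single j 1 : σ →₀ ℕ) j = γ j - 1 := by simp
  rw [h1, h2]
  rw [mul_assoc, ← pow_succ]
  congr 2
  omega

lemma mdeg_finsupp_sum (α : σ →₀ ℕ) : (α.sum fun _ e => e) = mdeg α :=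
  Finsupp.sum_fintype α _ (fun _ => rfl)

lemma totalDegree_le_of_family (p : (σ →₀ ℕ) → MvPolynomial σ ℝ) (D : ℕ)
    (hder : ∀ γ : σ →₀ ℕ, mdeg γ ≤ D → ∀ j,
      pderiv j (p γ) = ((γ j : ℝ)) • p (γ - Finsupp.single j 1)) :
    ∀ γ, mdeg γ ≤ D → (p γ).totalDegree ≤ mdeg γ := by
  suffices H : ∀ m γ, mdeg γ = m → mdeg γ ≤ D → (p γ).totalDegree ≤ mdeg γ by
    intro γ hγ; exact H (mdeg γ) γ rfl hγ
  intro m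
  induction m using Nat.strong_induction_on with
  | _ m ih =>
    intro γ hm hD
    rw [totalDegree]
    apply Finset.sup_le
    intro α hα
    rw [mdeg_finsupp_sum]
    rcases eq_or_ne α 0 with rfl | hne
    · simp [mdeg]
    · obtain ⟨j, hj⟩ : ∃ j, α j ≠ 0 := by
        by_contra hcon; push_neg at hcon
        exact hne (Finsupp.ext fun i => hcon i)
      have hco := coeff_pderiv_ne_zero (p γ) j α hj
      rw [hder γ hD j, MvPolynomial.coeff_smul, smul_eq_mul] at hco
      have hcα : coeff α (p γ) ≠ 0 := MvPolynomial.mem_support_iff.mp hα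
      have hRne : (↑(γ j) : ℝ) *
          coeff (α - Finsupp.single j 1) (p (γ - Finsupp.single j 1)) ≠ 0 := by
        rw [hco]
        exact mul_ne_zero (Nat.cast_ne_zero.mpr hj) hcα
      have hγj : γ j ≠ 0 := by
        intro h0; rw [h0] at hRne; simp at hRne
      have hmem : α - Finsupp.single j 1 ∈ (p (γ - Finsupp.single j 1)).support :=
        MvPolynomial.mem_support_iff.mpr (by intro h0; rw [h0, mul_zero] at hRne; exact hRne rfl)
      have hlt : mdeg (γ - Finsupp.single j 1) < m := by
        have := mdeg_sub_single hγj; omega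
      have hIH := ih (mdeg (γ - Finsupp.single j 1)) hlt (γ - Finsupp.single j 1) rfl
        (by have := mdeg_sub_single hγj; omega)
      have hα' : mdeg (α - Finsupp.single j 1) ≤ mdeg (γ - Finsupp.single j 1) := by
        have := le_totalDegree hmem
        rw [mdeg_finsupp_sum] at this
        exact le_trans this hIH
      have e1 := mdeg_sub_single hj
      have e2 := mdeg_sub_single hγj
      omega

lemma integrable_eval_poly {n : ℕ} {Ω : Type*} [MeasurableSpace Ω] (P : Measure Ω)
    (X : Ω → Fin n → ℝ) (hX : Measurable X) (D : ℕ)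
    (hmom : ∀ k : ℕ, k ≤ D → Integrable (fun ω => (∑ i, |X ω i|) ^ k) P)
    (f : MvPolynomial (Fin n) ℝ) (hf : f.totalDegree ≤ D) :
    Integrable (fun ω => eval (X ω) f) P := by
  set M : ℝ := ∑ d ∈ f.support, |coeff d f| with hM
  have hbound : Integrable (fun ω => M * (1 + ∑ i, |X ω i|) ^ D) P := by
    apply Integrable.const_mul
    have hrw : (fun ω => (1 + ∑ i, |X ω i|) ^ D)
        = fun ω => ∑ k ∈ Finset.range (D + 1), (∑ i, |X ω i|) ^ k * (D.choose k : ℝ) := by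
      funext ω
      rw [add_comm, add_pow]
      simp
    rw [hrw]
    apply integrable_finset_sum
    intro k hk
    exact (hmom k (by simp at hk; omega)).mul_const _
  apply hbound.mono'
  · exact ((MvPolynomial.continuous_eval f).measurable.comp hX).aestronglyMeasurable
  · filter_upwards with ω
    set x : Fin n → ℝ := X ω with hx
    set s : ℝ := ∑ i, |x i| with hs
    have hs0 : 0 ≤ s := Finset.sum_nonneg fun i _ => abs_nonneg _
    have h1s : (1 : ℝ) ≤ 1 + s := by linarith
    rw [Real.norm_eq_abs, eval_eq']
    calc |∑ d ∈ f.support, coeff d f * ∏ i, x i ^ d i|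
        ≤ ∑ d ∈ f.support, |coeff d f * ∏ i, x i ^ d i| := Finset.abs_sum_le_sum_abs _ _
      _ ≤ ∑ d ∈ f.support, |coeff d f| * (1 + s) ^ D := by
          apply Finset.sum_le_sum
          intro d hd
          rw [abs_mul]
          apply mul_le_mul_of_nonneg_left _ (abs_nonneg _)
          have hdeg : ∑ i, d i ≤ D := by
            have h1 := le_totalDegree hd
            rw [mdeg_finsupp_sum] at h1
            exact le_trans h1 hf
          calc |∏ i, x i ^ d i| = ∏ i, |x i| ^ d i := by
                rw [Finset.abs_prod]
                exact Finset.prod_congr rfl fun i _ => abs_pow _ _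
            _ ≤ ∏ i, (1 + s) ^ d i := by
                apply Finset.prod_le_prod
                · intro i _; positivity
                · intro i _
                  apply pow_le_pow_left₀ (abs_nonneg _)
                  have : |x i| ≤ s := Finset.single_le_sum
                    (fun j _ => abs_nonneg (x j)) (Finset.mem_univ i)
                  linarith
            _ = (1 + s) ^ (∑ i, d i) := Finset.prod_pow_eq_pow_sum _ _ _
            _ ≤ (1 + s) ^ D := pow_le_pow_right₀ h1s hdeg
      _ = M * (1 + s) ^ D := by rw [hM, Finset.sum_mul]

end Aux

theorem wick_scaling {n : ℕ} {Ω : Type*} [MeasurableSpace Ω]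
    (P : Measure Ω) [IsProbabilityMeasure P]
    (X : Ω → Fin n → ℝ) (hX : Measurable X)
    (β : Fin n →₀ ℕ)
    (hmom : ∀ k : ℕ, k ≤ mdeg β → Integrable (fun ω => (∑ i, |X ω i|) ^ k) P)
    (c : Fin n → ℝ) (hc : ∏ i, c i ^ β i = 1)
    (p pY : (Fin n →₀ ℕ) → MvPolynomial (Fin n) ℝ)
    (hp : IsSegalFamily (P.map X) ((mdeg β + 1 : ℕ) : ℕ∞) p)
    (hpY : IsSegalFamily (P.map (fun ω i => c i * X ω i)) ((mdeg β + 1 : ℕ) : ℕ∞) pY) :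
    (∀ ω, ∏ i, (c i * X ω i) ^ β i = ∏ i, X ω i ^ β i) ∧
    (∀ᵐ ω ∂P, eval (fun i => c i * X ω i) (pY β) = eval (X ω) (p β)) := by
  obtain ⟨hp0, hpder, hpint⟩ := hp
  obtain ⟨hpY0, hpYder, hpYint⟩ := hpY
  have part1 : ∀ ω, ∏ i, (c i * X ω i) ^ β i = ∏ i, X ω i ^ β i := by
    intro ω
    simp only [mul_pow]
    rw [Finset.prod_mul_distrib, hc, one_mul]
  refine ⟨part1, ?_⟩
  -- Setup
  set μ : Measure (Fin n → ℝ) := P.map X with hμ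
  haveI hμprob : IsProbabilityMeasure μ := Measure.isProbabilityMeasure_map hX.aemeasurable
  set g : (Fin n → ℝ) → (Fin n → ℝ) := fun x i => c i * x i with hgdef
  have hg : Measurable g :=
    measurable_pi_lambda _ fun i => (measurable_pi_apply i : Measurable fun x : Fin n → ℝ => x i).const_mul (c i)
  have hν : P.map (fun ω i => c i * X ω i) = μ.map g := by
    rw [hμ, Measure.map_map hg hX]; rfl
  rw [hν] at hpYint
  have hcast : ∀ γ : Fin n →₀ ℕ, mdeg γ ≤ mdeg β →
      (mdeg γ : ℕ∞) < ((mdeg β + 1 : ℕ) : ℕ∞) := by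
    intro γ h; exact_mod_cast Nat.lt_succ_of_le h
  have hcne : ∀ i, β i ≠ 0 → c i ≠ 0 := by
    intro i hi hci
    have : ∏ j, c j ^ β j = 0 :=
      Finset.prod_eq_zero (Finset.mem_univ i) (by rw [hci, zero_pow hi])
    rw [hc] at this; exact one_ne_zero this
  have hkne : ∀ γ : Fin n →₀ ℕ, (∀ i, γ i ≤ β i) → (∏ i, c i ^ γ i) ≠ 0 := by
    intro γ hγ
    apply Finset.prod_ne_zero_iff.mpr
    intro i _
    rcases Nat.eq_zero_or_pos (γ i) with h0 | hpos
    · rw [h0, pow_zero]; exact one_ne_zero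
    · exact pow_ne_zero _ (hcne i (by have := hγ i; omega))
  -- degree bound for p
  have hpdeg : ∀ γ, mdeg γ ≤ mdeg β → (p γ).totalDegree ≤ mdeg γ :=
    totalDegree_le_of_family p (mdeg β) (fun γ hγ j => hpder γ (hcast γ hγ) j)
  -- integrability of eval (p γ) w.r.t. μ
  have hint : ∀ γ : Fin n →₀ ℕ, mdeg γ ≤ mdeg β →
      Integrable (fun x => eval x (p γ)) μ := by
    intro γ hγ
    rw [hμ]
    exact (integrable_map_measure ((MvPolynomial.continuous_eval
        (p γ)).measurable.aestronglyMeasurable) hX.aemeasurable).mpr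
      (integrable_eval_poly P X hX (mdeg β) hmom (p γ) (le_trans (hpdeg γ hγ) hγ))
  -- the key uniqueness induction
  have key : ∀ m (γ : Fin n →₀ ℕ), mdeg γ = m → (∀ i, γ i ≤ β i) →
      p γ = C ((∏ i, c i ^ γ i)⁻¹) * bind₁ (fun i => C (c i) * MvPolynomial.X i) (pY γ) := by
    intro m
    induction m using Nat.strong_induction_on with
    | _ m ih =>
      intro γ hm hγβ
      subst hm
      have hγle : mdeg γ ≤ mdeg β := Finset.sum_le_sum (fun i _ => hγβ i)
      have hγcast := hcast γ hγle
      set q : MvPolynomial (Fin n) ℝ :=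
        C ((∏ i, c i ^ γ i)⁻¹) * bind₁ (fun i => C (c i) * MvPolynomial.X i) (pY γ) with hq
      rcases Nat.eq_zero_or_pos (mdeg γ) with hm0 | hmpos
      · -- γ = 0
        have hγ0 : γ = 0 := by
          ext i
          have h1 : ∑ i, γ i = 0 := hm0
          have := Finset.sum_eq_zero_iff.mp h1 i (Finset.mem_univ i)
          simpa using this
      /- base case -/
        rw [hγ0, hp0, hq, hγ0, hpY0]
        simp
      · -- inductive case: all partial derivatives of p γ - q vanish
        have hder0 : ∀ j, pderiv j (p γ - q) = 0 := by
          intro j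
          rw [map_sub]
          have h1 : pderiv j (p γ) = (γ j : ℝ) • p (γ - Finsupp.single j 1) :=
            hpder γ hγcast j
          have h2 : pderiv j q = (γ j : ℝ) • p (γ - Finsupp.single j 1) := by
            rcases Nat.eq_zero_or_pos (γ j) with hj0 | hjpos
            · rw [hq, pderiv_C_mul, pderiv_bind_scale, hpYder γ hγcast j, hj0]
              simp
            · have hjne : γ j ≠ 0 := by omega
              have hcj : c j ≠ 0 := hcne j (by have := hγβ j; omega)
              have hγ'β : ∀ i, (γ - Finsupp.single j 1 : Fin n →₀ ℕ) i ≤ β i := by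
                intro i
                have := hγβ i
                simp only [Finsupp.coe_tsub, Pi.sub_apply]
                omega
              have hlt : mdeg (γ - Finsupp.single j 1) < mdeg γ := by
                have := mdeg_sub_single hjne; omega
              have hIH := ih (mdeg (γ - Finsupp.single j 1)) hlt
                (γ - Finsupp.single j 1) rfl hγ'β
              rw [hq, pderiv_C_mul, pderiv_bind_scale, hpYder γ hγcast j]
              rw [_root_.map_smul, hIH]
              have hsplit := prod_pow_sub_single (c := c) hjne
              have hk' : (∏ i, c i ^ ((γ - Finsupp.single j 1 : Fin n →₀ ℕ) i)) ≠ 0 :=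
                hkne _ hγ'β
              have hsc : (∏ i, c i ^ γ i)⁻¹ * c j
                  = (∏ i, c i ^ ((γ - Finsupp.single j 1 : Fin n →₀ ℕ) i))⁻¹ := by
                rw [hsplit, mul_inv, mul_assoc, inv_mul_cancel₀ hcj, mul_one]
              have hCC : (C ((∏ i, c i ^ γ i)⁻¹) : MvPolynomial (Fin n) ℝ) * C (c j)
                  = C ((∏ i, c i ^ ((γ - Finsupp.single j 1 : Fin n →₀ ℕ) i))⁻¹) := by
                rw [← C_mul, hsc]
              rw [smul_eq_C_mul, smul_eq_C_mul, ← hCC]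
              ring
          rw [h1, h2, sub_self]
        have hconst := eq_C_of_pderiv_eq_zero _ hder0
        set a : ℝ := coeff 0 (p γ - q) with ha
        -- show a = 0 using integrals
        have hip : ∫ x, eval x (p γ) ∂μ = 0 := hpint γ hmpos hγcast
        have heq : ∀ x, eval x q = (∏ i, c i ^ γ i)⁻¹ * eval (g x) (pY γ) := by
          intro x
          rw [hq, eval_mul, eval_C, eval_bind_scale]
        have hiq : ∫ x, eval x q ∂μ = 0 := by
          calc ∫ x, eval x q ∂μ
              = ∫ x, (∏ i, c i ^ γ i)⁻¹ * eval (g x) (pY γ) ∂μ := by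
                simp_rw [heq]
            _ = (∏ i, c i ^ γ i)⁻¹ * ∫ x, eval (g x) (pY γ) ∂μ :=
                integral_const_mul _ _
            _ = (∏ i, c i ^ γ i)⁻¹ * ∫ y, eval y (pY γ) ∂(μ.map g) := by
                rw [integral_map hg.aemeasurable
                  (MvPolynomial.continuous_eval (pY γ)).measurable.aestronglyMeasurable]
            _ = 0 := by rw [hpYint γ hmpos hγcast, mul_zero]
        have hqev : ∀ x, eval x q = eval x (p γ) - a := by
          intro x
          have : q = p γ - C a := by
            rw [ha, ← hconst]; ring
          rw [this, eval_sub, eval_C]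
        have hintq : ∫ x, (eval x (p γ) - a) ∂μ = -a := by
          rw [integral_sub (hint γ hγle) (integrable_const a), hip, integral_const]
          simp
        have ha0 : a = 0 := by
          have : ∫ x, eval x q ∂μ = -a := by
            simp_rw [hqev]; exact hintq
          rw [hiq] at this
          linarith
        have : p γ - q = 0 := by rw [hconst, ha0, map_zero]
        linear_combination this
  have hfinal := key (mdeg β) β rfl (fun i => le_refl _)
  rw [hc] at hfinal
  apply Filter.Eventually.of_forall
  intro ω
  rw [hfinal, eval_mul, eval_C, eval_bind_scale]
  simp

end
end

section
/- Wick ordering is insensitive to repetition/omission of variables: let X = (X₁,…,X_n) be a random vector, J: {1,…,m} → {1,…,n} a function, and Y = (X_{J(1)},…,X_{J(m)}). If α ∈ ℕ^m and β ∈ ℕ^n satisfy β_j = Σ_{i: J(i)=j} α_i, then X^β = Y^α and :Y^α: = :X^β: almost surely (assuming moments of order |α| exist). -/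
open MeasureTheory MvPolynomial

noncomputable section

lemma coeff_pderiv' {σ : Type*} [DecidableEq σ] (i : σ) (φ : MvPolynomial σ ℝ) (d : σ →₀ ℕ) :
    coeff d (pderiv i φ) = ((d i : ℝ) + 1) * coeff (d + Finsupp.single i 1) φ := by
  induction φ using MvPolynomial.induction_on' with
  | monomial s a =>
    rw [pderiv_monomial, coeff_monomial, coeff_monomial]
    by_cases hs : s i = 0
    · have h1 : s - Finsupp.single i 1 = s := by
        ext j
        rcases eq_or_ne j i with rfl | hj
        · simp [hs]
        · simp [Finsupp.single_apply, Ne.symm hj]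
      have h2 : s ≠ d + Finsupp.single i 1 := by
        intro h
        apply absurd hs
        simp [h]
      rw [h1, if_neg h2]
      split_ifs with h
      · subst h; simp [hs]
      · ring
    · have hle : Finsupp.single i 1 ≤ s := by
        rw [Finsupp.single_le_iff]; omega
      have hiff : s - Finsupp.single i 1 = d ↔ s = d + Finsupp.single i 1 := by
        constructor
        · intro h; rw [← h, tsub_add_cancel_of_le hle]
        · intro h; rw [h, add_tsub_cancel_right]
      split_ifs with h1 h2 h2
      · rw [hiff] at h1
        have : s i = d i + 1 := by rw [h1]; simp
        rw [this]; push_cast; ring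
      · exact absurd (hiff.mp h1) h2
      · exact absurd (hiff.mpr h2) h1
      · ring
  | add p q hp hq => simp [hp, hq, mul_add]
lemma coeff_eq_zero_aux {σ : Type*} [DecidableEq σ] {φ : MvPolynomial σ ℝ} {d : σ →₀ ℕ} {i : σ}
    (hi : d i ≠ 0) (h : coeff d φ ≠ 0) :
    (d - Finsupp.single i 1) ∈ (pderiv i φ).support ∧
      (d - Finsupp.single i 1) + Finsupp.single i 1 = d := by
  have hle : Finsupp.single i 1 ≤ d := by rw [Finsupp.single_le_iff]; omega
  have hadd : (d - Finsupp.single i 1) + Finsupp.single i 1 = d := tsub_add_cancel_of_le hle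
  refine ⟨?_, hadd⟩
  set e : σ →₀ ℕ := d - Finsupp.single i 1 with he
  rw [mem_support_iff, coeff_pderiv', hadd]
  have : (0:ℝ) < (e i : ℝ) + 1 := by positivity
  exact mul_ne_zero this.ne' h

lemma eq_C_of_pderiv_zero {σ : Type*} [DecidableEq σ] (φ : MvPolynomial σ ℝ)
    (h : ∀ i, pderiv i φ = 0) : φ = C (coeff 0 φ) := by
  ext d
  rcases eq_or_ne d 0 with rfl | hd
  · simp
  · obtain ⟨i, hi⟩ : ∃ i, d i ≠ 0 := by
      by_contra hc
      push_neg at hc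
      exact hd (Finsupp.ext fun j => hc j)
    rw [coeff_C, if_neg (Ne.symm hd)]
    by_contra h0
    have := (coeff_eq_zero_aux hi h0).1
    rw [h i] at this
    simp at this

lemma totalDegree_le_of_pderiv {σ : Type*} [DecidableEq σ] (φ : MvPolynomial σ ℝ) (k : ℕ)
    (h : ∀ i, (pderiv i φ).totalDegree ≤ k) : φ.totalDegree ≤ k + 1 := by
  rw [MvPolynomial.totalDegree]
  apply Finset.sup_le
  intro d hd
  rcases eq_or_ne d 0 with rfl | hd0
  · simp
  · obtain ⟨i, hi⟩ : ∃ i, d i ≠ 0 := by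
      by_contra hc
      push_neg at hc
      exact hd0 (Finsupp.ext fun j => hc j)
    rw [mem_support_iff] at hd
    obtain ⟨hmem, hadd⟩ := coeff_eq_zero_aux hi hd
    have h1 : ((d - Finsupp.single i 1).sum fun _ e => e) ≤ k :=
      le_trans (le_totalDegree hmem) (h i)
    have h2 : (d.sum fun _ e => e) = ((d - Finsupp.single i 1).sum fun _ e => e) + 1 := by
      conv_lhs => rw [← hadd]
      rw [Finsupp.sum_add_index (by simp) (by intros; rfl)]
      simp
    omega
lemma pderiv_rename_sum {σ τ : Type*} [Fintype σ] [DecidableEq σ] [DecidableEq τ]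
    (J : σ → τ) (φ : MvPolynomial σ ℝ) (j : τ) :
    pderiv j (rename J φ) =
      ∑ i ∈ Finset.univ.filter (fun i => J i = j), rename J (pderiv i φ) := by
  induction φ using MvPolynomial.induction_on with
  | C a => simp [pderiv_C]
  | add p q hp hq => simp [map_add, hp, hq, Finset.sum_add_distrib]
  | mul_X p i hp =>
    simp only [map_mul, rename_X, pderiv_mul, hp, pderiv_X]
    have hsplit : ∀ x ∈ Finset.univ.filter (fun i' => J i' = j),
        rename J (pderiv x p * X i + p * Pi.single (M := fun _ => MvPolynomial σ ℝ) x 1 i) =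
          rename J (pderiv x p) * X (J i) + rename J (p * Pi.single (M := fun _ => MvPolynomial σ ℝ) x 1 i) := by
      intro x _; simp
    rw [Finset.sum_congr rfl hsplit, Finset.sum_add_distrib, ← Finset.sum_mul]
    congr 1
    have : ∀ i' ∈ Finset.univ.filter (fun i' => J i' = j),
        rename J (p * (Pi.single (M := fun _ => MvPolynomial σ ℝ) i' 1 i)) =
          if i' = i then rename J p else 0 := by
      intro i' _
      rcases eq_or_ne i' i with rfl | hne
      · simp
      · simp [Pi.single_apply, Ne.symm hne, hne]
    rw [Finset.sum_congr rfl this, Finset.sum_ite_eq' _ i]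
    simp only [Finset.mem_filter, Finset.mem_univ, true_and, Pi.single_apply]
    split_ifs with h1 <;> simp [h1]
lemma integrable_eval_poly_s15 {ι : Type*} [Fintype ι] (μ : Measure (ι → ℝ))
    [IsProbabilityMeasure μ] (d : ℕ)
    (hm : Integrable (fun x : ι → ℝ => (∑ i, |x i|) ^ d) μ)
    (φ : MvPolynomial ι ℝ) (hφ : φ.totalDegree ≤ d) :
    Integrable (fun x => eval x φ) μ := by
  set K : ℝ := ∑ u ∈ φ.support, |coeff u φ| with hK
  have hK0 : 0 ≤ K := Finset.sum_nonneg fun _ _ => abs_nonneg _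
  have hg : Integrable (fun x : ι → ℝ => K * (1 + (∑ i, |x i|) ^ d)) μ :=
    ((integrable_const (1:ℝ)).add hm).const_mul K
  refine hg.mono (MvPolynomial.continuous_eval φ).aestronglyMeasurable
    (Filter.Eventually.of_forall fun x => ?_)
  set s : ℝ := ∑ i, |x i| with hs
  have hs0 : 0 ≤ s := Finset.sum_nonneg fun _ _ => abs_nonneg _
  have hbound : ∀ u ∈ φ.support, |∏ i ∈ u.support, x i ^ u i| ≤ 1 + s ^ d := by
    intro u hu
    have h1 : |∏ i ∈ u.support, x i ^ u i| ≤ s ^ (u.sum fun _ e => e) := by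
      rw [Finset.abs_prod]
      calc ∏ i ∈ u.support, |x i ^ u i| ≤ ∏ i ∈ u.support, s ^ u i := by
            refine Finset.prod_le_prod (fun _ _ => abs_nonneg _) fun i _ => ?_
            rw [abs_pow]
            exact pow_le_pow_left₀ (abs_nonneg _)
              (Finset.single_le_sum (fun j _ => abs_nonneg (x j)) (Finset.mem_univ i)) _
        _ = s ^ (u.sum fun _ e => e) := by
            rw [Finsupp.sum, ← Finset.prod_pow_eq_pow_sum]
    refine h1.trans ?_
    have hle : (u.sum fun _ e => e) ≤ d := (le_totalDegree hu).trans hφ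
    rcases le_total s 1 with h | h
    · have : s ^ (u.sum fun _ e => e) ≤ 1 := pow_le_one₀ hs0 h
      nlinarith [pow_nonneg hs0 d]
    · have : s ^ (u.sum fun _ e => e) ≤ s ^ d := pow_le_pow_right₀ h hle
      linarith
  have h2 : ‖eval x φ‖ ≤ K * (1 + s ^ d) := by
    rw [Real.norm_eq_abs, eval_eq]
    calc |∑ u ∈ φ.support, coeff u φ * ∏ i ∈ u.support, x i ^ u i|
        ≤ ∑ u ∈ φ.support, |coeff u φ * ∏ i ∈ u.support, x i ^ u i| :=
          Finset.abs_sum_le_sum_abs _ _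
      _ ≤ ∑ u ∈ φ.support, |coeff u φ| * (1 + s ^ d) := by
          refine Finset.sum_le_sum fun u hu => ?_
          rw [abs_mul]
          exact mul_le_mul_of_nonneg_left (hbound u hu) (abs_nonneg _)
      _ = K * (1 + s ^ d) := by rw [← Finset.sum_mul]
  refine h2.trans ?_
  have h3 : 0 ≤ 1 + s ^ d := by positivity
  rw [Real.norm_eq_abs, abs_of_nonneg (mul_nonneg hK0 h3)]
-- sum over fibers lemmas
lemma sum_single_ite {n m : ℕ} (J : Fin m → Fin n) (i : Fin m) (j' : Fin n) :
    (∑ i', if J i' = j' then (Finsupp.single i 1 : Fin m →₀ ℕ) i' else 0)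
      = (Finsupp.single (J i) 1 : Fin n →₀ ℕ) j' := by
  rw [Finset.sum_eq_single i]
  · simp [Finsupp.single_apply, eq_comm]
  · intro b _ hb
    simp [Finsupp.single_apply, Ne.symm hb]
  · simp

lemma sum_ite_sub {n m : ℕ} (J : Fin m → Fin n) (α : Fin m →₀ ℕ) (i : Fin m)
    (hi : α i ≠ 0) (j' : Fin n) :
    (∑ i', if J i' = j' then α i' else 0)
      = (∑ i', if J i' = j' then ((α - Finsupp.single i 1 : Fin m →₀ ℕ)) i' else 0)
        + (Finsupp.single (J i) 1 : Fin n →₀ ℕ) j' := by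
  rw [← sum_single_ite J i j', ← Finset.sum_add_distrib]
  refine Finset.sum_congr rfl fun i' _ => ?_
  have h1 : ((α - Finsupp.single i 1 : Fin m →₀ ℕ)) i' = α i' - (Finsupp.single i 1 : Fin m →₀ ℕ) i' :=
    Finsupp.tsub_apply α (Finsupp.single i 1) i'
  have h2 : (Finsupp.single i 1 : Fin m →₀ ℕ) i' = if i = i' then 1 else 0 :=
    Finsupp.single_apply
  split_ifs with h
  · rw [h1, h2]
    split_ifs with h' <;> [skip; omega]
    subst h'; omega
  · rfl

lemma hβ_sub {n m : ℕ} (J : Fin m → Fin n) (α : Fin m →₀ ℕ) (β : Fin n →₀ ℕ)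
    (hβ : ∀ j, β j = ∑ i, if J i = j then α i else 0) (i : Fin m) (hi : α i ≠ 0) :
    ∀ j', ((β - Finsupp.single (J i) 1 : Fin n →₀ ℕ)) j'
      = ∑ i', if J i' = j' then ((α - Finsupp.single i 1 : Fin m →₀ ℕ)) i' else 0 := by
  intro j'
  rw [Finsupp.tsub_apply, hβ j', sum_ite_sub J α i hi j']
  omega

lemma mdeg_eq {n m : ℕ} (J : Fin m → Fin n) (α : Fin m →₀ ℕ) (β : Fin n →₀ ℕ)
    (hβ : ∀ j, β j = ∑ i, if J i = j then α i else 0) : mdeg β = mdeg α := by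
  unfold mdeg
  rw [Finset.sum_congr rfl fun j _ => hβ j, Finset.sum_comm]
  refine Finset.sum_congr rfl fun i _ => ?_
  simp

lemma mdeg_sub_single_s15 {ι : Type*} [Fintype ι] [DecidableEq ι] (β : ι →₀ ℕ) (j : ι)
    (hj : β j ≠ 0) : mdeg (β - Finsupp.single j 1) = mdeg β - 1 := by
  unfold mdeg
  have : ∀ i, ((β - Finsupp.single j 1 : ι →₀ ℕ)) i = β i - (Finsupp.single j 1 : ι →₀ ℕ) i :=
    fun i => Finsupp.tsub_apply β _ i
  rw [Finset.sum_congr rfl fun i _ => this i]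
  have hle : ∀ i, (Finsupp.single j 1 : ι →₀ ℕ) i ≤ β i := by
    intro i
    rw [Finsupp.single_apply]
    split_ifs with h
    · subst h; omega
    · omega
  have hsum : (∑ i : ι, ((β i - (Finsupp.single j 1 : ι →₀ ℕ) i)
      + (Finsupp.single j 1 : ι →₀ ℕ) i)) = ∑ i : ι, β i :=
    Finset.sum_congr rfl fun i _ => by have := hle i; omega
  rw [Finset.sum_add_distrib] at hsum
  have h1 : ∑ i : ι, (Finsupp.single j 1 : ι →₀ ℕ) i = 1 := by
    simp [Finsupp.single_apply]
  omega

lemma mdeg_eq_zero {ι : Type*} [Fintype ι] {β : ι →₀ ℕ} (h : mdeg β = 0) : β = 0 := by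
  unfold mdeg at h
  rw [Finset.sum_eq_zero_iff] at h
  exact Finsupp.ext fun i => h i (Finset.mem_univ i)

lemma prod_regroup {n m : ℕ} (J : Fin m → Fin n) (α : Fin m →₀ ℕ) (β : Fin n →₀ ℕ)
    (hβ : ∀ j, β j = ∑ i, if J i = j then α i else 0) (x : Fin n → ℝ) :
    ∏ i, x (J i) ^ α i = ∏ j, x j ^ β j := by
  rw [← Finset.prod_fiberwise_of_maps_to (g := J) (fun i _ => Finset.mem_univ (J i))
    (fun i => x (J i) ^ α i)]
  refine Finset.prod_congr rfl fun j _ => ?_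
  have h1 : ∀ i ∈ Finset.univ.filter (fun i => J i = j), x (J i) ^ α i = x j ^ α i := by
    intro i hi
    rw [(Finset.mem_filter.mp hi).2]
  rw [Finset.prod_congr rfl h1, Finset.prod_pow_eq_pow_sum, hβ j, Finset.sum_filter]

lemma segal_totalDegree {ι : Type*} [Fintype ι] [DecidableEq ι]
    (μ : Measure (ι → ℝ)) (N : ℕ∞) (p : (ι →₀ ℕ) → MvPolynomial ι ℝ)
    (hp : IsSegalFamily μ N p) :
    ∀ k (β : ι →₀ ℕ), mdeg β = k → (k : ℕ∞) < N → (p β).totalDegree ≤ k := by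
  intro k
  induction k with
  | zero =>
    intro β hβ _
    rw [mdeg_eq_zero hβ, hp.1]
    simp
  | succ k ih =>
    intro β hβ hk
    refine totalDegree_le_of_pderiv _ k fun j => ?_
    rw [hp.2.1 β (by rw [hβ]; exact hk) j]
    rcases eq_or_ne (β j) 0 with h0 | h0
    · simp [h0]
    · refine le_trans (totalDegree_smul_le _ _) ?_
      refine ih _ ?_ (lt_of_le_of_lt (by exact_mod_cast Nat.le_succ k) hk)
      rw [mdeg_sub_single_s15 β j h0, hβ]
      omega

theorem wick_partial_trace {n m : ℕ} {Ω : Type*} [MeasurableSpace Ω]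
    (P : Measure Ω) [IsProbabilityMeasure P]
    (X : Ω → Fin n → ℝ) (hX : Measurable X)
    (J : Fin m → Fin n) (α : Fin m →₀ ℕ) (β : Fin n →₀ ℕ)
    (hβ : ∀ j, β j = ∑ i, if J i = j then α i else 0)
    (N : ℕ∞) (hα : (mdeg α : ℕ∞) < N)
    (hmom : ∀ k : ℕ, (k : ℕ∞) < N → Integrable (fun ω => (∑ i, |X ω i|) ^ k) P)
    (p : (Fin n →₀ ℕ) → MvPolynomial (Fin n) ℝ)
    (pY : (Fin m →₀ ℕ) → MvPolynomial (Fin m) ℝ)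
    (hp : IsSegalFamily (P.map X) N p)
    (hpY : IsSegalFamily (P.map (fun ω (i : Fin m) => X ω (J i))) N pY) :
    (∀ ω, ∏ i, X ω (J i) ^ α i = ∏ j, X ω j ^ β j) ∧
    (∀ᵐ ω ∂P, eval (fun i => X ω (J i)) (pY α) = eval (X ω) (p β)) := by
  haveI : IsProbabilityMeasure (P.map X) := Measure.isProbabilityMeasure_map hX.aemeasurable
  set π : (Fin n → ℝ) → Fin m → ℝ := fun x i => x (J i) with hπdef
  have hπ : Measurable π := measurable_pi_lambda _ fun i => measurable_pi_apply (J i)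
  have hYmap : P.map (fun ω (i : Fin m) => X ω (J i)) = (P.map X).map π :=
    (Measure.map_map hπ hX).symm
  have hmomX : ∀ k : ℕ, (k : ℕ∞) < N →
      Integrable (fun x : Fin n → ℝ => (∑ i, |x i|) ^ k) (P.map X) := by
    intro k hk
    have hcont : Continuous fun x : Fin n → ℝ => (∑ i, |x i|) ^ k := by fun_prop
    exact (integrable_map_measure hcont.aestronglyMeasurable hX.aemeasurable).mpr
      (hmom k hk)
  -- the key polynomial identity
  have key : ∀ k : ℕ, ∀ (α' : Fin m →₀ ℕ) (β' : Fin n →₀ ℕ), mdeg α' = k →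
      (∀ j, β' j = ∑ i, if J i = j then α' i else 0) → (k : ℕ∞) < N →
      rename J (pY α') = p β' := by
    intro k
    induction k with
    | zero =>
      intro α' β' hmd hβ' _
      have hα0 : α' = 0 := mdeg_eq_zero hmd
      have hβ0 : β' = 0 := by
        subst hα0
        apply mdeg_eq_zero
        rw [mdeg_eq J 0 β' hβ']; simp [mdeg]
      rw [hα0, hβ0, hpY.1, hp.1, map_one]
    | succ k ih =>
      intro α' β' hmd hβ' hk
      have hmdβ : mdeg β' = k + 1 := by rw [mdeg_eq J α' β' hβ', hmd]
      set q : MvPolynomial (Fin n) ℝ := rename J (pY α') with hq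
      set r : MvPolynomial (Fin n) ℝ := p β' with hr
      have hkN : ((mdeg α' : ℕ) : ℕ∞) < N := by rw [hmd]; exact hk
      have hkβN : ((mdeg β' : ℕ) : ℕ∞) < N := by rw [hmdβ]; exact hk
      have hder : ∀ j, pderiv j q = pderiv j r := by
        intro j
        rw [hq, pderiv_rename_sum J (pY α') j, hr, hp.2.1 β' hkβN j]
        have hterm : ∀ i ∈ Finset.univ.filter (fun i => J i = j),
            rename J (pderiv i (pY α'))
              = (α' i : ℝ) • p (β' - Finsupp.single j 1) := by
          intro i hi
          have hJi : J i = j := (Finset.mem_filter.mp hi).2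
          rw [hpY.2.1 α' hkN i, _root_.map_smul]
          rcases eq_or_ne (α' i) 0 with h0 | h0
          · rw [h0]; simp
          · congr 1
            refine ih (α' - Finsupp.single i 1) (β' - Finsupp.single j 1) ?_ ?_ ?_
            · rw [mdeg_sub_single_s15 α' i h0, hmd]
              omega
            · intro j'
              rw [← hJi]
              exact hβ_sub J α' β' hβ' i h0 j'
            · exact lt_of_le_of_lt (by exact_mod_cast Nat.le_succ k) hk
        rw [Finset.sum_congr rfl hterm, ← Finset.sum_smul]
        congr 1
        have : (β' j : ℝ) = ((∑ i ∈ Finset.univ.filter (fun i => J i = j), α' i : ℕ) : ℝ) := by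
          rw [hβ' j, Finset.sum_filter]
        rw [this, Nat.cast_sum]
      -- q - r is a constant
      have hconst := eq_C_of_pderiv_zero (q - r)
        (fun j => by rw [map_sub, hder j, sub_self])
      set c : ℝ := coeff 0 (q - r) with hc
      have hqr : q = r + C c := by
        have := hconst
        rw [sub_eq_iff_eq_add] at this
        rw [this]; ring
      -- integrals
      have hcontq : Continuous fun y : Fin m → ℝ => eval y (pY α') := by
        exact MvPolynomial.continuous_eval _
      have hIq : ∫ x, eval x q ∂(P.map X) = 0 := by
        have h1 : ∀ x : Fin n → ℝ, eval x q = eval (π x) (pY α') := by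
          intro x
          rw [hq, eval_rename]
          rfl
        calc ∫ x, eval x q ∂(P.map X) = ∫ x, eval (π x) (pY α') ∂(P.map X) := by
              simp_rw [h1]
          _ = ∫ y, eval y (pY α') ∂((P.map X).map π) :=
              (integral_map hπ.aemeasurable hcontq.aestronglyMeasurable).symm
          _ = 0 := by
              rw [← hYmap]
              exact hpY.2.2 α' (by omega) hkN
      have hIr : ∫ x, eval x r ∂(P.map X) = 0 := hp.2.2 β' (by omega) hkβN
      have hint : Integrable (fun x => eval x r) (P.map X) :=
        integrable_eval_poly_s15 (P.map X) (k + 1) (hmomX (k + 1) hk) r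
          (segal_totalDegree (P.map X) N p hp (k + 1) β' hmdβ hk)
      have hceq : c = 0 := by
        have h2 : ∫ x, eval x q ∂(P.map X) = (∫ x, eval x r ∂(P.map X)) + c := by
          have h3 : ∀ x : Fin n → ℝ, eval x q = eval x r + c := by
            intro x; rw [hqr]; simp
          simp_rw [h3]
          rw [integral_add hint (integrable_const c), integral_const]
          simp
        rw [hIq, hIr] at h2
        linarith
      rw [hqr, hceq]
      simp
  have hmain : rename J (pY α) = p β := key (mdeg α) α β rfl hβ hα
  constructor
  · intro ω
    exact prod_regroup J α β hβ (X ω)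
  · refine Filter.Eventually.of_forall fun ω => ?_
    have := congrArg (eval (X ω)) hmain
    rw [eval_rename] at this
    exact this

end
end
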